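/- arXiv:1206.4343 — 3 statements merged into one kernel-verified Lean document; each statement's English description precedes it below -/
import Mathlib

section
/- Let D be a filtered triangulated category with shift of filtration (s, α), and let M be an object of D. Then the morphism α_{sM} : sM → M induced by the natural transformation α satisfies gr_i(α_{sM}) = 0 for all integers i. -/
open CategoryTheory CategoryTheory.Limits CategoryTheory.Pretriangulated

universe v u

/-- A filtered triangulated category in the sense of Beilinson: a (pre)triangulated
category `C` equipped with a bounded filtration by strictly full triangulated
subcategories `F^{≤n}`, `F^{≥n}`, truncation functors `wLe n ⊣ incl`, `incl ⊣ wGe n`,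
functorial distinguished truncation triangles, and a shift-of-filtration `(s, α)`. -/
structure FilteredTriangulated (C : Type u) [Category.{v} C]
    [HasZeroObject C] [Preadditive C] [HasShift C ℤ]
    [∀ n : ℤ, (CategoryTheory.shiftFunctor C n).Additive] [Pretriangulated C] where
  /-- the subcategory `F^{≤ n} C` -/
  Fle : ℤ → Set C
  /-- the subcategory `F^{≥ n} C` -/
  Fge : ℤ → Set C
  Fle_iso : ∀ (n : ℤ) {X Y : C}, (X ≅ Y) → X ∈ Fle n → Y ∈ Fle n
  Fge_iso : ∀ (n : ℤ) {X Y : C}, (X ≅ Y) → X ∈ Fge n → Y ∈ Fge n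
  Fle_shift : ∀ (n k : ℤ) (X : C), X ∈ Fle n → X⟦k⟧ ∈ Fle n
  Fge_shift : ∀ (n k : ℤ) (X : C), X ∈ Fge n → X⟦k⟧ ∈ Fge n
  Fle_ext₂ : ∀ (n : ℤ) (T : Triangle C), T ∈ (distTriang C) →
    T.obj₁ ∈ Fle n → T.obj₃ ∈ Fle n → T.obj₂ ∈ Fle n
  Fge_ext₂ : ∀ (n : ℤ) (T : Triangle C), T ∈ (distTriang C) →
    T.obj₁ ∈ Fge n → T.obj₃ ∈ Fge n → T.obj₂ ∈ Fge n
  /-- axiom (1): no homs from `F^{≤ n}` to `F^{≥ n+1}` -/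
  hom_vanish : ∀ {M N : C} (n : ℤ), M ∈ Fle n → N ∈ Fge (n + 1) → ∀ f : M ⟶ N, f = 0
  /-- axiom (2) -/
  le_mono : ∀ n : ℤ, Fle n ⊆ Fle (n + 1)
  ge_anti : ∀ n : ℤ, Fge (n + 1) ⊆ Fge n
  /-- axiom (4): boundedness -/
  exhaustive_le : ∀ X : C, ∃ n : ℤ, X ∈ Fle n
  exhaustive_ge : ∀ X : C, ∃ n : ℤ, X ∈ Fge n
  /-- axiom (5): the shift of filtration -/
  s : C ⥤ C
  s_isEquivalence : s.IsEquivalence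
  s_le : ∀ (n : ℤ) (X : C), X ∈ Fle n → s.obj X ∈ Fle (n + 1)
  s_ge : ∀ (n : ℤ) (X : C), X ∈ Fge n → s.obj X ∈ Fge (n + 1)
  /-- the natural transformation `α : s → id` -/
  α : s ⟶ 𝟭 C
  /-- `α_{sX} = s(α_X)`, i.e. `α_M = s(α_{s⁻¹ M})` -/
  α_shift : ∀ X : C, α.app (s.obj X) = s.map (α.app X)
  /-- axiom (6): `Hom(M, N) ≅ Hom(M, sN)` for `M ∈ F^{≥1}`, `N ∈ F^{≤0}` -/
  α_bij₁ : ∀ (M N : C), M ∈ Fge 1 → N ∈ Fle 0 →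
    Function.Bijective (fun f : M ⟶ s.obj N => f ≫ α.app N)
  /-- axiom (6): `Hom(s⁻¹M, N) ≅ Hom(M, N)` for `M ∈ F^{≥0}`, `N ∈ F^{≤0}` -/
  α_bij₂ : ∀ (M N : C), M ∈ Fge 0 → N ∈ Fle 0 →
    Function.Bijective (fun f : M ⟶ N => α.app M ≫ f)
  /-- the truncation functor `w_{≤ n}`, right adjoint to the inclusion of `F^{≤ n}` -/
  wLe : ℤ → C ⥤ C
  /-- the truncation functor `w_{≥ n}`, left adjoint to the inclusion of `F^{≥ n}` -/
  wGe : ℤ → C ⥤ C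
  wLe_mem : ∀ (n : ℤ) (X : C), (wLe n).obj X ∈ Fle n
  wGe_mem : ∀ (n : ℤ) (X : C), (wGe n).obj X ∈ Fge n
  wLe_preserves_ge : ∀ (n m : ℤ) (X : C), X ∈ Fge m → (wLe n).obj X ∈ Fge m
  wGe_preserves_le : ∀ (n m : ℤ) (X : C), X ∈ Fle m → (wGe n).obj X ∈ Fle m
  /-- counit `w_{≤ n} Z → Z` -/
  ι : ∀ n : ℤ, wLe n ⟶ 𝟭 C
  /-- unit `Z → w_{≥ n} Z` -/
  π : ∀ n : ℤ, 𝟭 C ⟶ wGe n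
  ι_iso : ∀ (n : ℤ) (X : C), X ∈ Fle n → IsIso ((ι n).app X)
  π_iso : ∀ (n : ℤ) (X : C), X ∈ Fge n → IsIso ((π n).app X)
  /-- adjunction-type universal properties of the truncations -/
  ι_universal : ∀ (n : ℤ) {X Z : C}, X ∈ Fle n → ∀ f : X ⟶ Z,
    ∃! g : X ⟶ (wLe n).obj Z, g ≫ (ι n).app Z = f
  π_universal : ∀ (n : ℤ) {Z Y : C}, Y ∈ Fge n → ∀ f : Z ⟶ Y,
    ∃! g : (wGe n).obj Z ⟶ Y, (π n).app Z ≫ g = f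
  /-- connecting morphism of the functorial truncation triangle -/
  δ : ∀ n : ℤ, wGe n ⟶ wLe (n - 1) ⋙ CategoryTheory.shiftFunctor C (1 : ℤ)
  /-- axiom (3): the functorial triangle `w_{≤ n-1} Z → Z → w_{≥ n} Z → ` is distinguished -/
  triangle_dist : ∀ (n : ℤ) (Z : C),
    Triangle.mk ((ι (n - 1)).app Z) ((π n).app Z) ((δ n).app Z) ∈ (distTriang C)
  /-- the canonical natural transformation `w_{≤ n-1} → w_{≤ n}` -/
  ιmono : ∀ n : ℤ, wLe (n - 1) ⟶ wLe n
  ιmono_comp : ∀ n : ℤ, ιmono n ≫ ι n = ι (n - 1)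
  /-- connecting morphism `gr_n Z → (w_{≤ n-1} Z)[1]` -/
  δ' : ∀ n : ℤ, wLe n ⋙ wGe n ⟶ wLe (n - 1) ⋙ CategoryTheory.shiftFunctor C (1 : ℤ)
  /-- the triangle `w_{≤ n-1} Z → w_{≤ n} Z → gr_n Z → ` is distinguished -/
  triangle_dist' : ∀ (n : ℤ) (Z : C),
    Triangle.mk ((ιmono n).app Z) ((π n).app ((wLe n).obj Z)) ((δ' n).app Z) ∈ (distTriang C)

namespace FilteredTriangulated

variable {C : Type u} [Category.{v} C] [HasZeroObject C] [Preadditive C] [HasShift C ℤ]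
  [∀ n : ℤ, (CategoryTheory.shiftFunctor C n).Additive] [Pretriangulated C]

/-- The functor `gr_n = w_{≥ n} ∘ w_{≤ n}`. -/
def gr (F : FilteredTriangulated C) (n : ℤ) : C ⥤ C := F.wLe n ⋙ F.wGe n

end FilteredTriangulated


namespace FilteredTriangulated

variable {C : Type u} [Category.{v} C] [HasZeroObject C] [Preadditive C] [HasShift C ℤ]
  [∀ n : ℤ, (CategoryTheory.shiftFunctor C n).Additive] [Pretriangulated C]

/-- `w_{≥ m}` of the unit `M → w_{≥ m-1} M` is an isomorphism (we produce an explicit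
two-sided inverse). -/
lemma winv_aux (F : FilteredTriangulated C) (m : ℤ) (M : C) :
    ∃ w : (F.wGe m).obj ((F.wGe (m-1)).obj M) ⟶ (F.wGe m).obj M,
      (F.wGe m).map ((F.π (m-1)).app M) ≫ w = 𝟙 _ ∧
      w ≫ (F.wGe m).map ((F.π (m-1)).app M) = 𝟙 _ := by
  have hm : m - 1 + 1 = m := by omega
  have hGM : (F.wGe m).obj M ∈ F.Fge m := F.wGe_mem m M
  have hGMlow : (F.wGe m).obj M ∈ F.Fge (m-1) := F.ge_anti (m-1) (by rw [hm]; exact hGM)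
  have hGB : (F.wGe m).obj ((F.wGe (m-1)).obj M) ∈ F.Fge m := F.wGe_mem m _
  have hGBlow : (F.wGe m).obj ((F.wGe (m-1)).obj M) ∈ F.Fge (m-1) :=
    F.ge_anti (m-1) (by rw [hm]; exact hGB)
  obtain ⟨v', hv', -⟩ := F.π_universal (m-1) hGMlow ((F.π m).app M)
  obtain ⟨w, hw, -⟩ := F.π_universal m hGM v'
  simp only [Functor.id_obj] at hv' hw
  have hnat : (F.π (m-1)).app M ≫ (F.π m).app ((F.wGe (m-1)).obj M)
      = (F.π m).app M ≫ (F.wGe m).map ((F.π (m-1)).app M) := by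
    simpa using (F.π m).naturality ((F.π (m-1)).app M)
  have h1 : (F.wGe m).map ((F.π (m-1)).app M) ≫ w = 𝟙 _ := by
    obtain ⟨g, -, hu⟩ := F.π_universal m hGM ((F.π m).app M)
    have c1 : (F.π m).app M ≫ (F.wGe m).map ((F.π (m-1)).app M) ≫ w
        = (F.π m).app M := by
      rw [← Category.assoc, ← hnat, Category.assoc, hw, hv']
    have c2 : (F.π m).app M ≫ 𝟙 ((F.wGe m).obj M) = (F.π m).app M := by simp
    exact (hu _ c1).trans (hu _ c2).symm
  have h2' : v' ≫ (F.wGe m).map ((F.π (m-1)).app M)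
      = (F.π m).app ((F.wGe (m-1)).obj M) := by
    obtain ⟨g, -, hu⟩ := F.π_universal (m-1) hGBlow
      ((F.π (m-1)).app M ≫ (F.π m).app ((F.wGe (m-1)).obj M))
    have c1 : (F.π (m-1)).app M ≫ v' ≫ (F.wGe m).map ((F.π (m-1)).app M)
        = (F.π (m-1)).app M ≫ (F.π m).app ((F.wGe (m-1)).obj M) := by
      rw [← Category.assoc, hv', hnat]
    have c2 : (F.π (m-1)).app M ≫ (F.π m).app ((F.wGe (m-1)).obj M)
        = (F.π (m-1)).app M ≫ (F.π m).app ((F.wGe (m-1)).obj M) := rfl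
    exact (hu _ c1).trans (hu _ c2).symm
  have h2 : w ≫ (F.wGe m).map ((F.π (m-1)).app M) = 𝟙 _ := by
    obtain ⟨g, -, hu⟩ := F.π_universal m hGB ((F.π m).app ((F.wGe (m-1)).obj M))
    have c1 : (F.π m).app ((F.wGe (m-1)).obj M) ≫ w ≫ (F.wGe m).map ((F.π (m-1)).app M)
        = (F.π m).app ((F.wGe (m-1)).obj M) := by
      rw [← Category.assoc, hw, h2']
    have c2 : (F.π m).app ((F.wGe (m-1)).obj M) ≫ 𝟙 _
        = (F.π m).app ((F.wGe (m-1)).obj M) := by simp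
    exact (hu _ c1).trans (hu _ c2).symm
  exact ⟨w, h1, h2⟩

/-- Any morphism from `w_{≤ m-1} M` to an object of `F^{≥ m-1}` extends along
`w_{≤ m-1}` of the unit `M → w_{≥ m-1} M`. -/
lemma key_aux (F : FilteredTriangulated C) (m : ℤ) (M : C) :
    ∀ Z : C, Z ∈ F.Fge (m-1) → ∀ z : (F.wLe (m-1)).obj M ⟶ Z,
      ∃ y : (F.wLe (m-1)).obj ((F.wGe (m-1)).obj M) ⟶ Z,
        (F.wLe (m-1)).map ((F.π (m-1)).app M) ≫ y = z := by
  intro Z hZ z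
  have hm2 : m - 1 - 1 + 1 = m - 1 := by omega
  have hZ' : Z ∈ F.Fge (m - 1 - 1 + 1) := by rw [hm2]; exact hZ
  have hZ1' : (shiftFunctor C (1:ℤ)).obj Z ∈ F.Fge (m - 1 - 1 + 1) := by
    rw [hm2]; exact F.Fge_shift (m-1) 1 Z hZ
  set B := (F.wGe (m-1)).obj M with hBdef
  set v : M ⟶ B := (F.π (m-1)).app M with hvdef
  have hT1 := F.triangle_dist (m-1) M
  have hT2 := F.triangle_dist m M
  have hT3 := F.triangle_dist m B
  obtain ⟨w, hw1', hw2'⟩ := F.winv_aux m M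
  have hw1 : (F.wGe m).map v ≫ w = 𝟙 ((F.wGe m).obj M) := hw1'
  have hw2 : w ≫ (F.wGe m).map v = 𝟙 ((F.wGe m).obj B) := hw2'
  clear hw1' hw2' 
  -- the modified third truncation triangle, with third object `w_{≥ m} M`
  have hTsh : Triangle.mk ((F.ι (m-1)).app B) ((F.π m).app B ≫ w)
      ((F.wGe m).map v ≫ (F.δ m).app B) ∈ distTriang C := by
    refine Pretriangulated.isomorphic_distinguished _ hT3 _ ?_
    refine Triangle.isoMk _ _ (Iso.refl _) (Iso.refl _)
      (⟨(F.wGe m).map v, w, hw1, hw2⟩ : _ ≅ _) ?_ ?_ ?_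
    · exact (Category.comp_id _).trans (Category.id_comp _).symm
    · show ((F.π m).app B ≫ w) ≫ (F.wGe m).map v = 𝟙 _ ≫ (F.π m).app B
      rw [Category.assoc, hw2, Category.comp_id, Category.id_comp]
    · show ((F.wGe m).map v ≫ (F.δ m).app B) ≫ (shiftFunctor C (1:ℤ)).map (𝟙 ((F.wLe (m-1)).obj B))
        = (F.wGe m).map v ≫ (F.δ m).app B
      rw [CategoryTheory.Functor.map_id]; exact Category.comp_id _
  have hR : (F.δ m).app M ≫ (shiftFunctor C (1:ℤ)).map ((F.wLe (m-1)).map v)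
      = (F.wGe m).map v ≫ (F.δ m).app B := by
    simpa using ((F.δ m).naturality v).symm
  have hπnat : v ≫ (F.π m).app B = (F.π m).app M ≫ (F.wGe m).map v := by
    simpa using (F.π m).naturality v
  have hκ : v ≫ (F.π m).app B ≫ w ≫ (F.δ m).app M = 0 := by
    rw [← Category.assoc, hπnat, Category.assoc, ← Category.assoc ((F.wGe m).map v), hw1,
      Category.id_comp]
    exact Pretriangulated.comp_distTriang_mor_zero₂₃ _ hT2

  -- step 1 : `δ_M ≫ z⟦1⟧` factors through the third morphism of the modified triangle
  obtain ⟨y₁, hy₁⟩ := Pretriangulated.Triangle.yoneda_exact₃ _ hTsh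
    ((F.δ m).app M ≫ (shiftFunctor C (1:ℤ)).map z) (by
      show ((F.π m).app B ≫ w) ≫ (F.δ m).app M ≫ (shiftFunctor C (1:ℤ)).map z = 0
      obtain ⟨g, hg⟩ := Pretriangulated.Triangle.yoneda_exact₃ _ hT1
        ((F.π m).app B ≫ w ≫ (F.δ m).app M) hκ
      have hgz : g ≫ (shiftFunctor C (1:ℤ)).map z = 0 :=
        F.hom_vanish (m-1-1) (F.Fle_shift _ 1 _ (F.wLe_mem (m-1-1) M)) hZ1' _
      have h0 : ((F.π m).app B ≫ w ≫ (F.δ m).app M)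
          ≫ (shiftFunctor C (1:ℤ)).map z = 0 := by
        erw [hg, Category.assoc, hgz, Limits.comp_zero]
      simpa [Category.assoc] using h0)
  simp only [Triangle.mk_obj₁, Triangle.mk_mor₃] at hy₁
  obtain ⟨yh, hyh⟩ : ∃ u : (F.wLe (m-1)).obj B ⟶ Z,
      (shiftFunctor C (1:ℤ)).map u = y₁ := (shiftFunctor C (1:ℤ)).map_surjective y₁
  -- step 2
  set z' : (F.wLe (m-1)).obj M ⟶ Z := z - (F.wLe (m-1)).map v ≫ yh with hz'def
  have h1 : (F.δ m).app M ≫ (shiftFunctor C (1:ℤ)).map ((F.wLe (m-1)).map v ≫ yh)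
      = (F.δ m).app M ≫ (shiftFunctor C (1:ℤ)).map z := by
    rw [Functor.map_comp, ← Category.assoc, hR, Category.assoc, hyh]; erw [hy₁]; exact (Category.assoc _ _ _).symm
  have hδz' : (F.δ m).app M ≫ (shiftFunctor C (1:ℤ)).map z' = 0 := by
    rw [hz'def, Functor.map_sub, Preadditive.comp_sub, h1, sub_self]
  -- step 3 : `z'` extends to `M`
  obtain ⟨g₂, hg₂⟩ := Pretriangulated.Triangle.yoneda_exact₃ _
    (Pretriangulated.rot_of_distTriang _ hT2) ((shiftFunctor C (1:ℤ)).map z') (by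
      show (F.δ m).app M ≫ (shiftFunctor C (1:ℤ)).map z' = 0
      exact hδz')
  simp only [Triangle.rotate_mor₃, Triangle.rotate_obj₁, Triangle.mk_obj₂,
    Triangle.mk_mor₁] at hg₂
  obtain ⟨m₀, hm₀⟩ : ∃ u : M ⟶ Z,
      (shiftFunctor C (1:ℤ)).map u = g₂ := (shiftFunctor C (1:ℤ)).map_surjective g₂
  have hz'eq : z' = (F.ι (m-1)).app M ≫ (-m₀) := by
    apply (shiftFunctor C (1:ℤ)).map_injective
    rw [Functor.map_comp, Functor.map_neg, hm₀]; erw [hg₂]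
    exact (Preadditive.neg_comp _ _).trans (Preadditive.comp_neg _ _).symm
  -- step 4 : the extension factors through `B`
  obtain ⟨b₀, hb₀⟩ : ∃ u : B ⟶ Z, -m₀ = v ≫ u :=
    Pretriangulated.Triangle.yoneda_exact₂ _ hT1 (-m₀)
      (F.hom_vanish (m-1-1) (F.wLe_mem (m-1-1) M) hZ' _)
  -- step 5 : assemble
  refine ⟨yh + (F.ι (m-1)).app B ≫ b₀, ?_⟩
  have hι : (F.wLe (m-1)).map v ≫ (F.ι (m-1)).app B = (F.ι (m-1)).app M ≫ v := by
    simpa using (F.ι (m-1)).naturality v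
  have hfact : (F.ι (m-1)).app M ≫ v ≫ b₀ = z' := by
    rw [hz'eq, hb₀]
  rw [Preadditive.comp_add, ← Category.assoc, hι, Category.assoc, hfact, hz'def]
  abel

end FilteredTriangulated

open FilteredTriangulated in
/-- For every object `M` of a filtered triangulated category, the morphism
`α_M : sM → M` induced by the natural transformation `α : s → id` satisfies
`gr_i (α_M) = 0` for all integers `i`. -/
theorem gr_map_alpha_eq_zero {C : Type u} [Category.{v} C] [HasZeroObject C]
    [Preadditive C] [HasShift C ℤ] [∀ n : ℤ, (CategoryTheory.shiftFunctor C n).Additive]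
    [Pretriangulated C] (F : FilteredTriangulated C) (M : C) (i : ℤ) :
    (F.gr i).map (F.α.app M) = 0 := by
  -- `w_{≤ i} (s (w_{≥ i} M)) ≅ 0` by orthogonality
  have hid : 𝟙 ((F.wLe i).obj (F.s.obj ((F.wGe i).obj M))) = 0 :=
    F.hom_vanish i (F.wLe_mem i _)
      (F.wLe_preserves_ge i (i+1) _ (F.s_ge i _ (F.wGe_mem i M))) (𝟙 _)
  -- extend `π : w_{≤i} M → gr_i M` along `w_{≤i}` of `M → w_{≥i} M`
  have hk := F.key_aux (i+1) M
  rw [show i + 1 - 1 = i by omega] at hk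
  obtain ⟨y, hy⟩ := hk _ (F.wGe_mem i ((F.wLe i).obj M)) ((F.π i).app ((F.wLe i).obj M))
  have hz0 : (F.wLe i).map (F.α.app M) ≫ (F.π i).app ((F.wLe i).obj M) = 0 := by
    rw [← hy, ← Category.assoc, ← Functor.map_comp]
    have hαv : F.α.app M ≫ (F.π i).app M
        = F.s.map ((F.π i).app M) ≫ F.α.app ((F.wGe i).obj M) := by
      simpa using (F.α.naturality ((F.π i).app M)).symm
    rw [hαv, Functor.map_comp,
      show (F.wLe i).map (F.α.app ((F.wGe i).obj M))
        = 𝟙 _ ≫ (F.wLe i).map (F.α.app ((F.wGe i).obj M)) from (Category.id_comp _).symm,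
      hid]
    simp
  have hnat : (F.π i).app ((F.wLe i).obj (F.s.obj M))
        ≫ (F.wGe i).map ((F.wLe i).map (F.α.app M))
      = (F.wLe i).map (F.α.app M) ≫ (F.π i).app ((F.wLe i).obj M) := by
    simpa using ((F.π i).naturality ((F.wLe i).map (F.α.app M))).symm
  obtain ⟨g, -, hu⟩ := F.π_universal i (F.wGe_mem i ((F.wLe i).obj M))
    (0 : (F.wLe i).obj (F.s.obj M) ⟶ (F.wGe i).obj ((F.wLe i).obj M))
  have h1 : (F.wGe i).map ((F.wLe i).map (F.α.app M)) = g := hu _ (by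
    show (F.π i).app ((F.wLe i).obj (F.s.obj M))
      ≫ (F.wGe i).map ((F.wLe i).map (F.α.app M)) = 0
    rw [hnat]; exact hz0)
  have h2 : (0 : (F.wGe i).obj ((F.wLe i).obj (F.s.obj M))
      ⟶ (F.wGe i).obj ((F.wLe i).obj M)) = g := hu 0 (by simp)
  show (F.wGe i).map ((F.wLe i).map (F.α.app M)) = 0
  rw [h1, ← h2]
end

section
/- Let D be a filtered triangulated category with shift of filtration (s, α), let f : M → N be a morphism in D, and let C be a cone of the composition sM →(α_{sM}) M →(f) N, so that there is a distinguished triangle N → C → (sM)[1] → N[1]. Then for every integer n there is an isomorphism gr_n C ≅ gr_n((sM)[1]) ⊕ gr_n N. -/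
open CategoryTheory CategoryTheory.Limits CategoryTheory.Pretriangulated

universe v u

section Auxiliary

variable {C : Type u} [Category.{v} C] [HasZeroObject C] [Preadditive C] [HasShift C ℤ]
  [∀ n : ℤ, (CategoryTheory.shiftFunctor C n).Additive] [Pretriangulated C]

lemma aux_bij_cancel {A B D : Type*} {f : A → B} {g : B → D}
    (hg : Function.Bijective g) (hgf : Function.Bijective (fun a => g (f a))) :
    Function.Bijective f := by
  constructor
  · intro a a' hh
    exact hgf.injective (by simp [hh])
  · intro b
    obtain ⟨a, ha⟩ := hgf.surjective (g b)
    exact ⟨a, hg.injective ha⟩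

lemma aux_bij_postcomp_neg {X Y Z' : C} (m : Y ⟶ Z')
    (hm : Function.Bijective (fun φ : X ⟶ Y => φ ≫ (-m))) :
    Function.Bijective (fun φ : X ⟶ Y => φ ≫ m) := by
  have he : (fun φ : X ⟶ Y => φ ≫ m) =
      (fun ψ : X ⟶ Z' => -ψ) ∘ (fun φ : X ⟶ Y => φ ≫ (-m)) := by
    funext φ; simp
  rw [he]
  exact (neg_involutive.bijective).comp hm

lemma aux_bij_precomp_neg {X Y Z' : C} (m : X ⟶ Y)
    (hm : Function.Bijective (fun φ : Y ⟶ Z' => (-m) ≫ φ)) :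
    Function.Bijective (fun φ : Y ⟶ Z' => m ≫ φ) := by
  have he : (fun φ : Y ⟶ Z' => m ≫ φ) =
      (fun ψ : X ⟶ Z' => -ψ) ∘ (fun φ : Y ⟶ Z' => (-m) ≫ φ) := by
    funext φ; simp
  rw [he]
  exact (neg_involutive.bijective).comp hm

/-- If `Hom(W, T.obj₃) = 0` and `Hom(W, T.obj₃⟦-1⟧) = 0`, then composition with `T.mor₁`
is bijective `Hom(W, T.obj₁) ≃ Hom(W, T.obj₂)`. -/
lemma aux_bij_postcomp_mor₁ (T : Triangle C) (hT : T ∈ distTriang C) (W : C)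
    (h0 : ∀ φ : W ⟶ T.obj₃, φ = 0) (h1 : ∀ φ : W ⟶ T.obj₃⟦(-1 : ℤ)⟧, φ = 0) :
    Function.Bijective (fun φ : W ⟶ T.obj₁ => φ ≫ T.mor₁) := by
  constructor
  · intro φ φ' hh
    dsimp at hh
    have hz : (φ - φ') ≫ T.mor₁ = 0 := by rw [Preadditive.sub_comp, hh, sub_self]
    obtain ⟨q, hq⟩ := Triangle.coyoneda_exact₂ _ (inv_rot_of_distTriang _ hT) (φ - φ') hz
    have hq2 : φ - φ' = 0 := hq.trans (by rw [h1 q]; exact zero_comp)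
    rwa [sub_eq_zero] at hq2
  · intro ψ
    obtain ⟨φ, hφ⟩ := Triangle.coyoneda_exact₂ _ hT ψ (h0 (ψ ≫ T.mor₂))
    exact ⟨φ, hφ.symm⟩

/-- If `Hom(T.obj₁, W) = 0` and `Hom(T.obj₁⟦1⟧, W) = 0`, then composition with `T.mor₂`
is bijective `Hom(T.obj₃, W) ≃ Hom(T.obj₂, W)`. -/
lemma aux_bij_precomp_mor₂ (T : Triangle C) (hT : T ∈ distTriang C) (W : C)
    (h0 : ∀ φ : T.obj₁ ⟶ W, φ = 0) (h1 : ∀ φ : T.obj₁⟦(1 : ℤ)⟧ ⟶ W, φ = 0) :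
    Function.Bijective (fun φ : T.obj₃ ⟶ W => T.mor₂ ≫ φ) := by
  constructor
  · intro φ φ' hh
    dsimp at hh
    have hz : T.mor₂ ≫ (φ - φ') = 0 := by rw [Preadditive.comp_sub, hh, sub_self]
    obtain ⟨q, hq⟩ := Triangle.yoneda_exact₃ _ hT (φ - φ') hz
    rw [h1 q, comp_zero] at hq
    rwa [sub_eq_zero] at hq
  · intro ψ
    obtain ⟨φ, hφ⟩ := Triangle.yoneda_exact₂ _ hT ψ (h0 (T.mor₁ ≫ ψ))
    exact ⟨φ, hφ.symm⟩

/-- Five lemma, covariant form, for morphisms of distinguished triangles. -/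
lemma aux_five_coyoneda (T₁ T₂ : Triangle C) (hT₁ : T₁ ∈ distTriang C)
    (hT₂ : T₂ ∈ distTriang C)
    (a : T₁.obj₁ ⟶ T₂.obj₁) (b : T₁.obj₂ ⟶ T₂.obj₂) (c : T₁.obj₃ ⟶ T₂.obj₃)
    (comm₁ : T₁.mor₁ ≫ b = a ≫ T₂.mor₁) (comm₂ : T₁.mor₂ ≫ c = b ≫ T₂.mor₂)
    (comm₃ : T₁.mor₃ ≫ a⟦(1 : ℤ)⟧' = c ≫ T₂.mor₃) (W : C)
    (ha : Function.Bijective (fun φ : W ⟶ T₁.obj₁ => φ ≫ a))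
    (hb : Function.Bijective (fun φ : W ⟶ T₁.obj₂ => φ ≫ b))
    (ha' : Function.Bijective (fun φ : W ⟶ T₁.obj₁⟦(1 : ℤ)⟧ => φ ≫ a⟦(1 : ℤ)⟧'))
    (hb' : Function.Bijective (fun φ : W ⟶ T₁.obj₂⟦(1 : ℤ)⟧ => φ ≫ b⟦(1 : ℤ)⟧')) :
    Function.Bijective (fun φ : W ⟶ T₁.obj₃ => φ ≫ c) := by
  constructor
  · suffices hinj : ∀ χ : W ⟶ T₁.obj₃, χ ≫ c = 0 → χ = 0 by
      intro φ φ' hh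
      dsimp at hh
      have := hinj (φ - φ') (by rw [Preadditive.sub_comp, hh, sub_self])
      rwa [sub_eq_zero] at this
    intro χ hχ
    have h1 : χ ≫ T₁.mor₃ = 0 := by
      apply ha'.injective
      dsimp
      rw [Category.assoc, comm₃, ← Category.assoc, hχ, zero_comp, zero_comp]
    obtain ⟨σ, hσ⟩ := Triangle.coyoneda_exact₃ _ hT₁ χ h1
    have h2 : (σ ≫ b) ≫ T₂.mor₂ = 0 := by
      rw [Category.assoc, ← comm₂, ← Category.assoc, ← hσ, hχ]
    obtain ⟨ρ, hρ⟩ := Triangle.coyoneda_exact₂ _ hT₂ (σ ≫ b) h2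
    obtain ⟨τ, hτ⟩ := ha.surjective ρ
    dsimp at hτ
    have h3 : σ = τ ≫ T₁.mor₁ := by
      have h4 : (σ - τ ≫ T₁.mor₁) ≫ b = 0 := by
        rw [Preadditive.sub_comp, Category.assoc, comm₁, ← Category.assoc, hτ, ← hρ, sub_self]
      have h5 := hb.injective (a₁ := σ - τ ≫ T₁.mor₁) (a₂ := 0) (by rw [h4, zero_comp])
      rwa [sub_eq_zero] at h5
    rw [hσ, h3, Category.assoc, comp_distTriang_mor_zero₁₂ _ hT₁, comp_zero]
  · intro ψ
    obtain ⟨θ, hθ⟩ := ha'.surjective (ψ ≫ T₂.mor₃)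
    dsimp at hθ
    have h2 : θ ≫ T₁.mor₁⟦(1 : ℤ)⟧' = 0 := by
      apply hb'.injective
      dsimp
      rw [Category.assoc, ← Functor.map_comp, comm₁, Functor.map_comp, ← Category.assoc, hθ,
        Category.assoc, comp_distTriang_mor_zero₃₁ _ hT₂, comp_zero, zero_comp]
    obtain ⟨χ, hχ⟩ := Triangle.coyoneda_exact₁ _ hT₁ θ h2
    have h3 : (ψ - χ ≫ c) ≫ T₂.mor₃ = 0 := by
      rw [Preadditive.sub_comp, Category.assoc, ← comm₃, ← Category.assoc, ← hχ, hθ, sub_self]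
    obtain ⟨ρ, hρ⟩ := Triangle.coyoneda_exact₃ _ hT₂ _ h3
    obtain ⟨σ, hσ⟩ := hb.surjective ρ
    dsimp at hσ
    refine ⟨χ + σ ≫ T₁.mor₂, ?_⟩
    dsimp
    rw [Preadditive.add_comp, Category.assoc, comm₂, ← Category.assoc, hσ, ← hρ]
    abel

/-- Five lemma, contravariant form, for morphisms of distinguished triangles. -/
lemma aux_five_yoneda (T₁ T₂ : Triangle C) (hT₁ : T₁ ∈ distTriang C)
    (hT₂ : T₂ ∈ distTriang C)
    (a : T₁.obj₁ ⟶ T₂.obj₁) (b : T₁.obj₂ ⟶ T₂.obj₂) (c : T₁.obj₃ ⟶ T₂.obj₃)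
    (comm₁ : T₁.mor₁ ≫ b = a ≫ T₂.mor₁) (comm₂ : T₁.mor₂ ≫ c = b ≫ T₂.mor₂)
    (comm₃ : T₁.mor₃ ≫ a⟦(1 : ℤ)⟧' = c ≫ T₂.mor₃) (W : C)
    (ha : Function.Bijective (fun φ : T₂.obj₁ ⟶ W => a ≫ φ))
    (hb : Function.Bijective (fun φ : T₂.obj₂ ⟶ W => b ≫ φ))
    (ha' : Function.Bijective (fun φ : T₂.obj₁⟦(1 : ℤ)⟧ ⟶ W => a⟦(1 : ℤ)⟧' ≫ φ))
    (hb' : Function.Bijective (fun φ : T₂.obj₂⟦(1 : ℤ)⟧ ⟶ W => b⟦(1 : ℤ)⟧' ≫ φ)) :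
    Function.Bijective (fun φ : T₂.obj₃ ⟶ W => c ≫ φ) := by
  constructor
  · suffices hinj : ∀ χ : T₂.obj₃ ⟶ W, c ≫ χ = 0 → χ = 0 by
      intro φ φ' hh
      dsimp at hh
      have := hinj (φ - φ') (by rw [Preadditive.comp_sub, hh, sub_self])
      rwa [sub_eq_zero] at this
    intro χ hχ
    have h1 : T₂.mor₂ ≫ χ = 0 := by
      apply hb.injective
      dsimp
      rw [← Category.assoc, ← comm₂, Category.assoc, hχ, comp_zero, comp_zero]
    obtain ⟨q, hq⟩ := Triangle.yoneda_exact₃ _ hT₂ χ h1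
    have h2 : T₁.mor₃ ≫ (a⟦(1 : ℤ)⟧' ≫ q) = 0 := by
      rw [← Category.assoc, comm₃, Category.assoc, ← hq, hχ]
    -- exactness of `Hom(-, W)` at `T₁.obj₁⟦1⟧` via the rotated triangle
    obtain ⟨r, hr⟩ := Triangle.yoneda_exact₃ _ (rot_of_distTriang _ hT₁)
      (a⟦(1 : ℤ)⟧' ≫ q) h2
    -- `hr : a⟦1⟧' ≫ q = (-T₁.mor₁⟦1⟧') ≫ r`
    obtain ⟨r₂, hr₂⟩ := hb'.surjective r
    dsimp at hr₂
    have h3 : a⟦(1 : ℤ)⟧' ≫ q = a⟦(1 : ℤ)⟧' ≫ (-(T₂.mor₁⟦(1 : ℤ)⟧' ≫ r₂)) := by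
      refine hr.trans ?_
      rw [← hr₂]
      change (-(T₁.mor₁⟦(1 : ℤ)⟧')) ≫ (b⟦(1 : ℤ)⟧' ≫ r₂) =
        a⟦(1 : ℤ)⟧' ≫ (-(T₂.mor₁⟦(1 : ℤ)⟧' ≫ r₂))
      rw [Preadditive.neg_comp, Preadditive.comp_neg, ← Category.assoc,
        ← Functor.map_comp, comm₁, Functor.map_comp, Category.assoc]
    have h4 : q = -(T₂.mor₁⟦(1 : ℤ)⟧' ≫ r₂) := ha'.injective h3
    rw [hq, h4, Preadditive.comp_neg, ← Category.assoc,
      comp_distTriang_mor_zero₃₁ _ hT₂, zero_comp, neg_zero]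
  · intro ψ
    obtain ⟨φ₂, hφ₂⟩ := hb.surjective (T₁.mor₂ ≫ ψ)
    dsimp at hφ₂
    have h1 : T₂.mor₁ ≫ φ₂ = 0 := by
      apply ha.injective
      dsimp
      rw [← Category.assoc, ← comm₁, Category.assoc, hφ₂, ← Category.assoc,
        comp_distTriang_mor_zero₁₂ _ hT₁, zero_comp, comp_zero]
    obtain ⟨ρ₀, hρ₀⟩ := Triangle.yoneda_exact₂ _ hT₂ φ₂ h1
    have h2 : T₁.mor₂ ≫ (ψ - c ≫ ρ₀) = 0 := by
      rw [Preadditive.comp_sub, ← Category.assoc, comm₂, Category.assoc, ← hρ₀, hφ₂, sub_self]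
    obtain ⟨g₁, hg₁⟩ := Triangle.yoneda_exact₃ _ hT₁ _ h2
    obtain ⟨g₂, hg₂⟩ := ha'.surjective g₁
    dsimp at hg₂
    refine ⟨ρ₀ + T₂.mor₃ ≫ g₂, ?_⟩
    dsimp
    rw [Preadditive.comp_add, ← Category.assoc, ← comm₃, Category.assoc, hg₂, ← hg₁]
    abel

/-- A distinguished triangle whose first map vanishes splits. -/
lemma aux_split_of_mor₁_eq_zero [HasBinaryBiproducts C] (T : Triangle C)
    (hT : T ∈ distTriang C) (hz : T.mor₁ = 0) :
    Nonempty (T.obj₃ ≅ T.obj₂ ⊞ (T.obj₁⟦(1 : ℤ)⟧)) := by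
  have hrot := rot_of_distTriang _ hT
  have hz₃ : T.rotate.mor₃ = 0 := by
    dsimp [Triangle.rotate]
    rw [hz, Functor.map_zero, neg_zero]; rfl
  -- section of `T.rotate.mor₂`
  obtain ⟨s, hs⟩ := Triangle.coyoneda_exact₃ _ hrot (𝟙 T.rotate.obj₃)
    (by rw [hz₃, comp_zero])
  let φ : binaryBiproductTriangle T.rotate.obj₁ T.rotate.obj₃ ⟶ T.rotate :=
    { hom₁ := 𝟙 _
      hom₂ := biprod.desc T.rotate.mor₁ s
      hom₃ := 𝟙 _
      comm₁ := by
        change (biprod.inl : T.rotate.obj₁ ⟶ T.rotate.obj₁ ⊞ T.rotate.obj₃) ≫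
          biprod.desc T.rotate.mor₁ s = 𝟙 T.rotate.obj₁ ≫ T.rotate.mor₁
        exact (biprod.inl_desc _ _).trans (Category.id_comp _).symm
      comm₂ := by
        change (biprod.snd : T.rotate.obj₁ ⊞ T.rotate.obj₃ ⟶ T.rotate.obj₃) ≫ 𝟙 T.rotate.obj₃ =
          biprod.desc T.rotate.mor₁ s ≫ T.rotate.mor₂
        apply biprod.hom_ext'
        · rw [Category.comp_id, biprod.inl_snd, ← Category.assoc, biprod.inl_desc]
          exact (comp_distTriang_mor_zero₁₂ _ hrot).symm
        · rw [Category.comp_id, biprod.inr_snd, ← Category.assoc, biprod.inr_desc]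
          exact hs
      comm₃ := by
        change (0 : T.rotate.obj₃ ⟶ T.rotate.obj₁⟦(1 : ℤ)⟧) ≫ (𝟙 T.rotate.obj₁)⟦(1 : ℤ)⟧' =
          𝟙 T.rotate.obj₃ ≫ T.rotate.mor₃
        rw [zero_comp, Category.id_comp, hz₃] }
  have : IsIso φ.hom₂ := isIso₂_of_isIso₁₃ φ
    (binaryBiproductTriangle_distinguished _ _) hrot (by change IsIso (𝟙 _); infer_instance) (by change IsIso (𝟙 _); infer_instance)
  exact ⟨(asIso φ.hom₂).symm⟩

/-! Auxiliary lemmas specific to filtered triangulated categories. -/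

variable (F : FilteredTriangulated C) (n : ℤ)

/-- For `W ∈ F^{≤n}`, composition with `ι : w_{≤n} Z → Z` is bijective on `Hom(W, -)`. -/
lemma aux_bij_ι (Z W : C) (hW : W ∈ F.Fle n) :
    Function.Bijective (fun φ : W ⟶ (F.wLe n).obj Z => φ ≫ (F.ι n).app Z) := by
  obtain ⟨m, rfl⟩ : ∃ m : ℤ, n = m - 1 := ⟨n + 1, by omega⟩
  have hmem : (F.wGe m).obj Z ∈ F.Fge (m - 1 + 1) := by
    rw [show m - 1 + 1 = m by omega]; exact F.wGe_mem m Z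
  exact aux_bij_postcomp_mor₁ _ (F.triangle_dist m Z) W
    (fun φ => F.hom_vanish (m - 1) hW hmem φ)
    (fun φ => F.hom_vanish (m - 1) hW (F.Fge_shift (m - 1 + 1) (-1) _ hmem) φ)

/-- For `W ∈ F^{≤n}`, composition with `ι⟦1⟧ : (w_{≤n} Z)⟦1⟧ → Z⟦1⟧` is bijective. -/
lemma aux_bij_ι_shift (Z W : C) (hW : W ∈ F.Fle n) :
    Function.Bijective
      (fun φ : W ⟶ ((F.wLe n).obj Z)⟦(1 : ℤ)⟧ => φ ≫ ((F.ι n).app Z)⟦(1 : ℤ)⟧') := by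
  obtain ⟨m, rfl⟩ : ∃ m : ℤ, n = m - 1 := ⟨n + 1, by omega⟩
  have hmem : (F.wGe m).obj Z ∈ F.Fge (m - 1 + 1) := by
    rw [show m - 1 + 1 = m by omega]; exact F.wGe_mem m Z
  have h3 := rot_of_distTriang _
    (rot_of_distTriang _ (rot_of_distTriang _ (F.triangle_dist m Z)))
  refine aux_bij_postcomp_neg _ (aux_bij_postcomp_mor₁ _ h3 W ?_ ?_)
  · exact fun φ => F.hom_vanish (m - 1) hW (F.Fge_shift (m - 1 + 1) 1 _ hmem) φ
  · exact fun φ => F.hom_vanish (m - 1) hW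
      (F.Fge_shift (m - 1 + 1) (-1) _ (F.Fge_shift (m - 1 + 1) 1 _ hmem)) φ

/-- For `W ∈ F^{≥n}`, composition with `π : Z → w_{≥n} Z` is bijective on `Hom(-, W)`. -/
lemma aux_bij_π (Z W : C) (hW : W ∈ F.Fge n) :
    Function.Bijective (fun φ : (F.wGe n).obj Z ⟶ W => (F.π n).app Z ≫ φ) := by
  have hW' : W ∈ F.Fge (n - 1 + 1) := by rw [show n - 1 + 1 = n by omega]; exact hW
  exact aux_bij_precomp_mor₂ _ (F.triangle_dist n Z) W
    (fun φ => F.hom_vanish (n - 1) (F.wLe_mem (n - 1) Z) hW' φ)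
    (fun φ => F.hom_vanish (n - 1) (F.Fle_shift (n - 1) 1 _ (F.wLe_mem (n - 1) Z)) hW' φ)

/-- For `W ∈ F^{≥n}`, composition with `π⟦1⟧ : Z⟦1⟧ → (w_{≥n} Z)⟦1⟧` is bijective. -/
lemma aux_bij_π_shift (Z W : C) (hW : W ∈ F.Fge n) :
    Function.Bijective
      (fun φ : ((F.wGe n).obj Z)⟦(1 : ℤ)⟧ ⟶ W => ((F.π n).app Z)⟦(1 : ℤ)⟧' ≫ φ) := by
  have hW' : W ∈ F.Fge (n - 1 + 1) := by rw [show n - 1 + 1 = n by omega]; exact hW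
  have h3 := rot_of_distTriang _
    (rot_of_distTriang _ (rot_of_distTriang _ (F.triangle_dist n Z)))
  refine aux_bij_precomp_neg _ (aux_bij_precomp_mor₂ _ h3 W ?_ ?_)
  · exact fun φ => F.hom_vanish (n - 1) (F.Fle_shift (n - 1) 1 _ (F.wLe_mem (n - 1) Z)) hW' φ
  · exact fun φ => F.hom_vanish (n - 1)
      (F.Fle_shift (n - 1) 1 _ (F.Fle_shift (n - 1) 1 _ (F.wLe_mem (n - 1) Z))) hW' φ

/-- Uniqueness of the `F^{≤n}`-colocalization: an object of `F^{≤n}` mapping to `Z`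
and corepresenting `Hom(W, Z)` on `F^{≤n}` is isomorphic to `w_{≤n} Z`. -/
lemma aux_iso_wLe {K Z : C} (hK : K ∈ F.Fle n) (k : K ⟶ Z)
    (hk : ∀ W : C, W ∈ F.Fle n → Function.Bijective (fun φ : W ⟶ K => φ ≫ k)) :
    Nonempty (K ≅ (F.wLe n).obj Z) := by
  obtain ⟨k', hk', -⟩ := F.ι_universal n hK k
  have hbij : ∀ W : C, W ∈ F.Fle n → Function.Bijective (fun φ : W ⟶ K => φ ≫ k') := by
    intro W hW
    refine aux_bij_cancel (aux_bij_ι F n Z W hW) ?_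
    have he : (fun φ : W ⟶ K => (φ ≫ k') ≫ (F.ι n).app Z) = fun φ : W ⟶ K => φ ≫ k := by
      funext φ; rw [Category.assoc, hk']
    exact he ▸ hk W hW
  obtain ⟨g', hg'⟩ := (hbij _ (F.wLe_mem n Z)).surjective (𝟙 ((F.wLe n).obj Z))
  dsimp at hg'
  have hkg : k' ≫ g' = 𝟙 K := by
    apply (hbij K hK).injective
    dsimp
    rw [Category.assoc, hg', Category.comp_id, Category.id_comp]
  exact ⟨⟨k', g', hkg, hg'⟩⟩

/-- Uniqueness of the `F^{≥n}`-localization. -/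
lemma aux_iso_wGe {K K₂ : C} (hK₂ : K₂ ∈ F.Fge n) (κ : K ⟶ K₂)
    (hκ : ∀ W : C, W ∈ F.Fge n → Function.Bijective (fun φ : K₂ ⟶ W => κ ≫ φ)) :
    Nonempty ((F.wGe n).obj K ≅ K₂) := by
  obtain ⟨κ', hκ', -⟩ := F.π_universal n hK₂ κ
  have hbij : ∀ W : C, W ∈ F.Fge n → Function.Bijective (fun φ : K₂ ⟶ W => κ' ≫ φ) := by
    intro W hW
    refine aux_bij_cancel (aux_bij_π F n K W hW) ?_
    have he : (fun φ : K₂ ⟶ W => (F.π n).app K ≫ κ' ≫ φ) = fun φ : K₂ ⟶ W => κ ≫ φ := by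
      funext φ; rw [← Category.assoc, hκ']
    exact he ▸ hκ W hW
  obtain ⟨ρ, hρ⟩ := (hbij _ (F.wGe_mem n K)).surjective (𝟙 ((F.wGe n).obj K))
  dsimp at hρ
  have hρκ : ρ ≫ κ' = 𝟙 K₂ := by
    apply (hbij K₂ hK₂).injective
    dsimp
    rw [← Category.assoc, hρ, Category.comp_id, Category.id_comp]
  exact ⟨⟨κ', ρ, hρ, hρκ⟩⟩

/-- The key vanishing: `gr_n(α_M) = 0`. -/
lemma aux_gr_α_zero (M : C) :
    (F.wGe n).map ((F.wLe n).map (F.α.app M)) = 0 := by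
  have hnat : F.α.app M ≫ (F.π n).app M
      = F.s.map ((F.π n).app M) ≫ F.α.app ((F.wGe n).obj M) := by
    simpa using (F.α.naturality ((F.π n).app M)).symm
  have h0 : (F.ι n).app (F.s.obj M) ≫ F.s.map ((F.π n).app M) = 0 :=
    F.hom_vanish n (F.wLe_mem n _) (F.s_ge n _ (F.wGe_mem n M)) _
  have hc : ((F.ι n).app (F.s.obj M) ≫ F.α.app M) ≫ (F.π n).app M = 0 := by
    rw [Category.assoc, hnat, ← Category.assoc, h0, zero_comp]
  obtain ⟨q, hq⟩ := Triangle.coyoneda_exact₂ _ (F.triangle_dist n M)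
    ((F.ι n).app (F.s.obj M) ≫ F.α.app M) hc
  change (F.wLe n).obj (F.s.obj M) ⟶ (F.wLe (n - 1)).obj M at q
  have heq : (F.wLe n).map (F.α.app M) = q ≫ (F.ιmono n).app M := by
    obtain ⟨l, -, hu⟩ := F.ι_universal n (Z := M) (F.wLe_mem n (F.s.obj M))
      ((F.ι n).app (F.s.obj M) ≫ F.α.app M)
    have h1 : (F.wLe n).map (F.α.app M) = l :=
      hu _ (by simpa using (F.ι n).naturality (F.α.app M))
    have h2 : q ≫ (F.ιmono n).app M = l := by
      apply hu
      rw [Category.assoc]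
      have hιι : (F.ιmono n).app M ≫ (F.ι n).app M = (F.ι (n - 1)).app M := by
        rw [← NatTrans.comp_app, F.ιmono_comp n]
      rw [hιι]
      exact hq.symm
    rw [h1, ← h2]
  rw [heq, Functor.map_comp]
  have hz : (F.wGe n).map ((F.ιmono n).app M) = 0 := by
    apply F.hom_vanish (n - 1) (F.wGe_preserves_le n (n - 1) _ (F.wLe_mem (n - 1) M))
    rw [show n - 1 + 1 = n by omega]
    exact F.wGe_mem n _
  rw [hz, comp_zero]

/-- `gr_n` commutes with the shift `⟦1⟧` up to isomorphism. -/
lemma aux_gr_shift (X : C) :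
    Nonempty ((F.gr n).obj (X⟦(1 : ℤ)⟧) ≅ ((F.gr n).obj X)⟦(1 : ℤ)⟧) := by
  obtain ⟨e₁⟩ := aux_iso_wLe F n (F.Fle_shift n 1 _ (F.wLe_mem n X))
    (((F.ι n).app X)⟦(1 : ℤ)⟧') (fun W hW => aux_bij_ι_shift F n X W hW)
  obtain ⟨e₂⟩ := aux_iso_wGe F n (F.Fge_shift n 1 _ (F.wGe_mem n ((F.wLe n).obj X)))
    (((F.π n).app ((F.wLe n).obj X))⟦(1 : ℤ)⟧')
    (fun W hW => aux_bij_π_shift F n ((F.wLe n).obj X) W hW)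
  exact ⟨(F.wGe n).mapIso e₁.symm ≪≫ e₂⟩

end Auxiliary

open FilteredTriangulated in
/-- If `Cn` is a cone of the composition `sM → M → N` of `α_M` with `f : M → N`,
so that `N → Cn → (sM)[1] → N[1]` is distinguished, then for every `n` we have
`gr_n Cn ≅ gr_n ((sM)[1]) ⊕ gr_n N`. -/
theorem gr_cone_of_comp_alpha_splits {C : Type u} [Category.{v} C] [HasZeroObject C]
    [Preadditive C] [HasShift C ℤ] [∀ n : ℤ, (CategoryTheory.shiftFunctor C n).Additive]
    [Pretriangulated C] [HasBinaryBiproducts C] (F : FilteredTriangulated C)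
    {M N Cn : C} (f : M ⟶ N) (g : N ⟶ Cn) (h : Cn ⟶ (F.s.obj M)⟦(1 : ℤ)⟧)
    (hT : Triangle.mk (F.α.app M ≫ f) g h ∈ (distTriang C)) (n : ℤ) :
    Nonempty ((F.gr n).obj Cn ≅
      ((F.gr n).obj ((F.s.obj M)⟦(1 : ℤ)⟧)) ⊞ ((F.gr n).obj N)) := by
  set u : F.s.obj M ⟶ N := F.α.app M ≫ f with hu
  have hgru : (F.wGe n).map ((F.wLe n).map u) = 0 := by
    rw [hu, Functor.map_comp, Functor.map_comp, aux_gr_α_zero F n M, zero_comp]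
  -- the cone of `w_{≤n}(u)`
  obtain ⟨K, v₁, w₁, hT₁⟩ := distinguished_cocone_triangle ((F.wLe n).map u)
  have hK : K ∈ F.Fle n := by
    refine F.Fle_ext₂ n (Triangle.mk ((F.wLe n).map u) v₁ w₁).rotate
      (rot_of_distTriang _ hT₁) (F.wLe_mem n N) ?_
    exact F.Fle_shift n 1 _ (F.wLe_mem n (F.s.obj M))
  -- comparison morphism `k : K ⟶ Cn`
  obtain ⟨k, hk₁, hk₂⟩ := complete_distinguished_triangle_morphism
    (Triangle.mk ((F.wLe n).map u) v₁ w₁) (Triangle.mk u g h) hT₁ hT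
    ((F.ι n).app (F.s.obj M)) ((F.ι n).app N) (by exact (F.ι n).naturality u)
  have hbijk : ∀ W : C, W ∈ F.Fle n → Function.Bijective (fun φ : W ⟶ K => φ ≫ k) := by
    intro W hW
    exact aux_five_coyoneda (Triangle.mk ((F.wLe n).map u) v₁ w₁) (Triangle.mk u g h)
      hT₁ hT ((F.ι n).app (F.s.obj M)) ((F.ι n).app N) k
      (by exact (F.ι n).naturality u) hk₁ hk₂ W
      (aux_bij_ι F n (F.s.obj M) W hW) (aux_bij_ι F n N W hW)
      (aux_bij_ι_shift F n (F.s.obj M) W hW) (aux_bij_ι_shift F n N W hW)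
  obtain ⟨eK⟩ := aux_iso_wLe F n hK k hbijk
  -- the cone of `gr_n(u)`
  obtain ⟨K₂, v₂, w₂, hT₂⟩ := distinguished_cocone_triangle ((F.wGe n).map ((F.wLe n).map u))
  have hK₂ : K₂ ∈ F.Fge n := by
    refine F.Fge_ext₂ n (Triangle.mk ((F.wGe n).map ((F.wLe n).map u)) v₂ w₂).rotate
      (rot_of_distTriang _ hT₂) (F.wGe_mem n _) ?_
    exact F.Fge_shift n 1 _ (F.wGe_mem n _)
  -- comparison morphism `κ : K ⟶ K₂`
  obtain ⟨κ, hκ₁, hκ₂⟩ := complete_distinguished_triangle_morphism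
    (Triangle.mk ((F.wLe n).map u) v₁ w₁)
    (Triangle.mk ((F.wGe n).map ((F.wLe n).map u)) v₂ w₂) hT₁ hT₂
    ((F.π n).app ((F.wLe n).obj (F.s.obj M))) ((F.π n).app ((F.wLe n).obj N))
    (by exact (F.π n).naturality ((F.wLe n).map u))
  have hbijκ : ∀ W : C, W ∈ F.Fge n → Function.Bijective (fun φ : K₂ ⟶ W => κ ≫ φ) := by
    intro W hW
    exact aux_five_yoneda (Triangle.mk ((F.wLe n).map u) v₁ w₁)
      (Triangle.mk ((F.wGe n).map ((F.wLe n).map u)) v₂ w₂) hT₁ hT₂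
      ((F.π n).app ((F.wLe n).obj (F.s.obj M))) ((F.π n).app ((F.wLe n).obj N)) κ
      (by exact (F.π n).naturality ((F.wLe n).map u)) hκ₁ hκ₂ W
      (aux_bij_π F n ((F.wLe n).obj (F.s.obj M)) W hW) (aux_bij_π F n ((F.wLe n).obj N) W hW)
      (aux_bij_π_shift F n ((F.wLe n).obj (F.s.obj M)) W hW)
      (aux_bij_π_shift F n ((F.wLe n).obj N) W hW)
  obtain ⟨eG⟩ := aux_iso_wGe F n hK₂ κ hbijκ
  -- the cone of the zero morphism `gr_n(u)` splits
  obtain ⟨esplit⟩ := aux_split_of_mor₁_eq_zero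
    (Triangle.mk ((F.wGe n).map ((F.wLe n).map u)) v₂ w₂) hT₂ hgru
  -- `gr_n` commutes with the shift
  obtain ⟨eshift⟩ := aux_gr_shift F n (F.s.obj M)
  exact ⟨(F.wGe n).mapIso eK.symm ≪≫ eG ≪≫ esplit ≪≫ biprod.braiding _ _ ≪≫
    biprod.mapIso eshift.symm (Iso.refl ((F.gr n).obj N))⟩
end

section
/- Let D be a filtered triangulated category and let f : M → N be a morphism in D such that Hom(gr_n M, w_{≤ n-1} N) = 0 for all integers n. Then f = 0 if and only if gr_i f = 0 for all integers i. -/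
open CategoryTheory CategoryTheory.Limits CategoryTheory.Pretriangulated

universe v u

open FilteredTriangulated in
/-- If `Hom(gr_n M, w_{≤ n-1} N) = 0` for all integers `n`, then a morphism
`f : M → N` is zero if and only if `gr_i f = 0` for all integers `i`. -/
theorem eq_zero_iff_gr_map_eq_zero {C : Type u} [Category.{v} C] [HasZeroObject C]
    [Preadditive C] [HasShift C ℤ] [∀ n : ℤ, (CategoryTheory.shiftFunctor C n).Additive]
    [Pretriangulated C] (F : FilteredTriangulated C) {M N : C} (f : M ⟶ N)
    (hvanish : ∀ (n : ℤ) (g : (F.gr n).obj M ⟶ (F.wLe (n - 1)).obj N), g = 0) :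
    f = 0 ↔ ∀ i : ℤ, (F.gr i).map f = 0 := by
  constructor
  · intro hf i
    rw [hf]
    have hle : (F.wLe i).map (0 : M ⟶ N) = 0 := by
      obtain ⟨g, hg, hu⟩ := F.ι_universal i (F.wLe_mem i M) (0 : (F.wLe i).obj M ⟶ N)
      have h1 : (F.wLe i).map (0 : M ⟶ N) ≫ (F.ι i).app N = 0 := by
        rw [(F.ι i).naturality]; simp
      rw [hu _ h1, hu 0 (by simp)]
    show (F.wGe i).map ((F.wLe i).map (0 : M ⟶ N)) = 0
    rw [hle]
    obtain ⟨g, hg, hu⟩ := F.π_universal i (F.wGe_mem i ((F.wLe i).obj N))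
      (0 : (F.wLe i).obj M ⟶ (F.wGe i).obj ((F.wLe i).obj N))
    have h1 : (F.π i).app ((F.wLe i).obj M) ≫
        (F.wGe i).map (0 : (F.wLe i).obj M ⟶ (F.wLe i).obj N) = 0 := by
      rw [← (F.π i).naturality]; simp
    rw [hu _ h1, hu 0 (by simp)]
  · intro hgr
    obtain ⟨n₀, hn₀⟩ := F.exhaustive_le M
    obtain ⟨n₁, hn₁⟩ := F.exhaustive_ge N
    have Fle_mono : ∀ (k : ℕ) (m : ℤ) (X : C), X ∈ F.Fle m → X ∈ F.Fle (m + k) := by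
      intro k
      induction k with
      | zero => intro m X h; simpa using h
      | succ k ih =>
        intro m X h
        have e : (m + ((k + 1 : ℕ) : ℤ)) = (m + k) + 1 := by push_cast; ring
        rw [e]
        exact F.le_mono _ (ih m X h)
    have step : ∀ n : ℤ, (F.ι n).app M ≫ f = 0 → (F.ι (n + 1)).app M ≫ f = 0 := by
      intro n ih
      have e : n + 1 - 1 = n := by omega
      -- the composite with `ιmono` is zero
      have h₁ : (F.ιmono (n + 1)).app M ≫ (F.ι (n + 1)).app M ≫ f = 0 := by
        rw [← Category.assoc, ← NatTrans.comp_app, F.ιmono_comp, e, ih]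
      obtain ⟨g, hg⟩ : ∃ g : (F.wGe (n + 1)).obj ((F.wLe (n + 1)).obj M) ⟶ N,
          (F.ι (n + 1)).app M ≫ f = (F.π (n + 1)).app ((F.wLe (n + 1)).obj M) ≫ g :=
        Pretriangulated.Triangle.yoneda_exact₂ _
        (F.triangle_dist' (n + 1) M) ((F.ι (n + 1)).app M ≫ f) h₁
      -- `g ≫ π N = 0`
      have h₂ : (F.π (n + 1)).app ((F.wLe (n + 1)).obj M) ≫ g ≫ (F.π (n + 1)).app N = 0 := by
        have e₁ : (F.π (n + 1)).app ((F.wLe (n + 1)).obj M) ≫ g ≫ (F.π (n + 1)).app N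
            = ((F.ι (n + 1)).app M ≫ f) ≫ (F.π (n + 1)).app N := by
          rw [← Category.assoc,
            show (F.π (n + 1)).app ((F.wLe (n + 1)).obj M) ≫ g
              = (F.ι (n + 1)).app M ≫ f from hg.symm]
        rw [e₁, Category.assoc]
        have e₂ : (F.ι (n + 1)).app M ≫ f = (F.wLe (n + 1)).map f ≫ (F.ι (n + 1)).app N :=
          ((F.ι (n + 1)).naturality f).symm
        rw [← Category.assoc, e₂]
        have e₃ : (F.ι (n + 1)).app N ≫ (F.π (n + 1)).app N
            = (F.π (n + 1)).app ((F.wLe (n + 1)).obj N)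
              ≫ (F.wGe (n + 1)).map ((F.ι (n + 1)).app N) := by
          simpa using (F.π (n + 1)).naturality ((F.ι (n + 1)).app N)
        rw [Category.assoc, e₃, ← Category.assoc]
        have e₄ : (F.wLe (n + 1)).map f ≫ (F.π (n + 1)).app ((F.wLe (n + 1)).obj N)
            = (F.π (n + 1)).app ((F.wLe (n + 1)).obj M)
              ≫ (F.wGe (n + 1)).map ((F.wLe (n + 1)).map f) :=
          (F.π (n + 1)).naturality ((F.wLe (n + 1)).map f)
        rw [e₄]
        have e₅ : (F.wGe (n + 1)).map ((F.wLe (n + 1)).map f) = 0 := hgr (n + 1)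
        rw [e₅]
        simp
      have hg0 : g ≫ (F.π (n + 1)).app N = 0 := by
        obtain ⟨h, hh, hu⟩ := F.π_universal (n + 1) (F.wGe_mem (n + 1) N)
          (0 : (F.wLe (n + 1)).obj M ⟶ (F.wGe (n + 1)).obj N)
        rw [hu _ h₂, hu 0 (by simp)]
      -- factor `g` through `wLe n N` using the truncation triangle of `N`
      obtain ⟨h, hh⟩ : ∃ h : (F.wGe (n + 1)).obj ((F.wLe (n + 1)).obj M) ⟶
          (F.wLe (n + 1 - 1)).obj N, g = h ≫ (F.ι (n + 1 - 1)).app N :=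
        Pretriangulated.Triangle.coyoneda_exact₂ _
        (F.triangle_dist (n + 1) N) g hg0
      have hh0 : h = 0 := hvanish (n + 1) h
      rw [hg, hh, hh0]
      simp
    have key : ∀ n : ℤ, n₁ - 1 ≤ n → (F.ι n).app M ≫ f = 0 := by
      have base : (F.ι (n₁ - 1)).app M ≫ f = 0 := by
        refine F.hom_vanish (n₁ - 1) (F.wLe_mem _ M) ?_ _
        rw [sub_add_cancel]
        exact hn₁
      exact Int.le_induction base (fun m _ ih => step m ih)
    obtain ⟨k', hk'⟩ : ∃ k' : ℕ, n₀ + (k' : ℤ) = max n₀ (n₁ - 1) :=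
      ⟨(max n₀ (n₁ - 1) - n₀).toNat, by omega⟩
    have hM : M ∈ F.Fle (max n₀ (n₁ - 1)) := by
      rw [← hk']
      exact Fle_mono k' n₀ M hn₀
    have hf0 : (F.ι (max n₀ (n₁ - 1))).app M ≫ f = 0 :=
      key _ (le_max_right _ _)
    have hiso := F.ι_iso (max n₀ (n₁ - 1)) M hM
    rw [← cancel_epi ((F.ι (max n₀ (n₁ - 1))).app M), comp_zero]
    exact hf0
end
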